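/- If X and Y are clans of a matrix M with X ∩ Y ≠ ∅, then X ∪ Y is a clan of M. -/
import Mathlib


def IsClan {m : Type*} (M : Matrix m m ℝ) (X : Set m) : Prop :=
  ∀ i ∈ X, ∀ j ∈ X, ∀ k ∉ X, M i k = M j k ∧ M k i = M k j

theorem stmt4 {n : ℕ} (M : Matrix (Fin n) (Fin n) ℝ) (X Y : Set (Fin n))
    (hX : IsClan M X) (hY : IsClan M Y) (h : (X ∩ Y).Nonempty) :
    IsClan M (X ∪ Y) := by
  obtain ⟨a, haX, haY⟩ := h
  intro i hi j hj k hk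
  rw [Set.mem_union] at hi hj
  have hkX : k ∉ X := fun hx => hk (Set.mem_union_left _ hx)
  have hkY : k ∉ Y := fun hy => hk (Set.mem_union_right _ hy)
  have key : ∀ i, i ∈ X ∪ Y → M i k = M a k ∧ M k i = M k a := by
    intro i hi
    rcases hi with hi | hi
    · exact hX i hi a haX k hkX
    · exact hY i hi a haY k hkY
  obtain ⟨h1, h2⟩ := key i (Set.mem_union _ _ _ |>.mpr hi)
  obtain ⟨h3, h4⟩ := key j (Set.mem_union _ _ _ |>.mpr hj)
  exact ⟨h1.trans h3.symm, h2.trans h4.symm⟩
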